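/- arXiv:1808.04633 — 6 statements merged into one kernel-verified Lean document; each statement's English description precedes it below -/
import Mathlib

section
/- Let 0 < α < 1 and let θ̃ ∈ [0, π/2). For θ̄ ∈ [0, π/2 + θ̃), define F(θ̄) = (cos θ̃)^(α-1) · cos(αθ̄ - θ̃) / (cos(θ̄ - θ̃))^α. Then F(θ̄) ≥ F(0) = 1 for all θ̄ ∈ [0, π/2 + θ̃). -/
open Real

/-- F(θ̄) = (cos θ̃)^(α-1) · cos(αθ̄ - θ̃) / (cos(θ̄ - θ̃))^α satisfies F(0)=1 and F(θ̄) ≥ 1. -/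
theorem stmt_0 (α θt : ℝ) (hα0 : 0 < α) (hα1 : α < 1)
    (hθt0 : 0 ≤ θt) (hθt : θt < π / 2) :
    (Real.cos θt ^ (α - 1) * Real.cos (α * 0 - θt) / Real.cos (0 - θt) ^ α = 1) ∧
    ∀ θb : ℝ, 0 ≤ θb → θb < π / 2 + θt →
      Real.cos θt ^ (α - 1) * Real.cos (α * θb - θt) / Real.cos (θb - θt) ^ α ≥
      Real.cos θt ^ (α - 1) * Real.cos (α * 0 - θt) / Real.cos (0 - θt) ^ α := by
  have hc0 : 0 < Real.cos θt := Real.cos_pos_of_mem_Ioo ⟨by linarith [Real.pi_pos], hθt⟩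
  have hF0 : Real.cos θt ^ (α - 1) * Real.cos (α * 0 - θt) / Real.cos (0 - θt) ^ α = 1 := by
    simp only [mul_zero, zero_sub, Real.cos_neg]
    rw [← Real.rpow_add_one hc0.ne' (α - 1), sub_add_cancel, div_self (by positivity)]
  refine ⟨hF0, fun θb hb0 hb1 => ?_⟩
  rw [hF0, ge_iff_le]
  have hc1 : 0 < Real.cos (θb - θt) :=
    Real.cos_pos_of_mem_Ioo ⟨by linarith, by linarith⟩
  -- key: cos(θb-θt)^α * cos(θt)^(1-α) ≤ cos(α θb - θt)
  have hmem1 : θb - θt ∈ Set.Icc (-(π/2)) (π/2) := ⟨by linarith, by linarith⟩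
  have hmem2 : -θt ∈ Set.Icc (-(π/2)) (π/2) := ⟨by linarith, by linarith⟩
  have hconc := strictConcaveOn_cos_Icc.concaveOn.2 hmem1 hmem2 hα0.le (by linarith)
    (by ring : α + (1 - α) = 1)
  simp only [smul_eq_mul] at hconc
  have heq : α * (θb - θt) + (1 - α) * -θt = α * θb - θt := by ring
  rw [heq, Real.cos_neg] at hconc
  have hgm : Real.cos (θb - θt) ^ α * Real.cos θt ^ (1 - α) ≤
      α * Real.cos (θb - θt) + (1 - α) * Real.cos θt :=
    Real.geom_mean_le_arith_mean2_weighted hα0.le (by linarith) hc1.le hc0.le (by ring)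
  have key : Real.cos (θb - θt) ^ α * Real.cos θt ^ (1 - α) ≤ Real.cos (α * θb - θt) :=
    hgm.trans hconc
  rw [le_div_iff₀ (by positivity), one_mul]
  have hrw : Real.cos θt ^ (α - 1) * Real.cos (α * θb - θt) =
      Real.cos (α * θb - θt) / Real.cos θt ^ (1 - α) := by
    rw [div_eq_mul_inv, ← Real.rpow_neg hc0.le]
    ring_nf
  rw [hrw, le_div_iff₀ (by positivity)]
  calc Real.cos (θb - θt) ^ α * Real.cos θt ^ (1 - α) ≤ Real.cos (α * θb - θt) := key
end

section
/- Let 0 < α < 1 and let θ ∈ [π/2, π). If z is a complex number with z ≠ 0 and |arg z| ≤ θ, then (z+1)^α lies in the set { w ∈ ℂ : w - 1 ≠ 0 and |arg(w - 1)| ≤ θ } ∪ {1}; equivalently, ((z+1)^α - 1) ∈ Σ_θ ∪ {0}, where Σ_θ = { w ∈ ℂ : |arg w| ≤ θ }. -/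
open Real Complex

private lemma aux_cpow_re_im (w : ℂ) (hw : w ≠ 0) (α : ℝ) :
    (w ^ (α : ℂ)).re = ‖w‖ ^ α * Real.cos (α * w.arg) ∧
    (w ^ (α : ℂ)).im = ‖w‖ ^ α * Real.sin (α * w.arg) := by
  rw [Complex.cpow_def_of_ne_zero hw, Complex.exp_re, Complex.exp_im,
    Complex.mul_re, Complex.mul_im, Complex.ofReal_re, Complex.ofReal_im,
    Complex.log_re, Complex.log_im, Real.rpow_def_of_pos (norm_pos_iff.mpr hw)]
  constructor <;> ring_nf

/-- Criterion: for `v` with nonneg imaginary part, a cross-product condition gives `arg v ≤ θ`. -/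
private lemma aux_arg_le_of_cross (θ : ℝ) (hθ0 : 0 < θ) (hθ2 : θ < π) (v : ℂ) (hv : v ≠ 0)
    (him : 0 ≤ v.im) (h : 0 ≤ Real.sin θ * v.re - Real.cos θ * v.im) : v.arg ≤ θ := by
  have h1 : 0 ≤ v.arg := Complex.arg_nonneg_iff.mpr him
  have h2 : v.arg ≤ π := Complex.arg_le_pi v
  by_contra hlt
  push_neg at hlt
  have habs : (0:ℝ) < ‖v‖ := norm_pos_iff.mpr hv
  have hre : v.re = ‖v‖ * Real.cos v.arg := by
    rw [Complex.cos_arg hv]; field_simp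
  have him' : v.im = ‖v‖ * Real.sin v.arg := by
    rw [Complex.sin_arg]; field_simp
  have hkey : Real.sin θ * v.re - Real.cos θ * v.im
      = ‖v‖ * Real.sin (θ - v.arg) := by
    rw [Real.sin_sub, hre, him']; ring
  have hneg : Real.sin (θ - v.arg) < 0 :=
    Real.sin_neg_of_neg_of_neg_pi_lt (by linarith) (by linarith)
  nlinarith

set_option maxHeartbeats 1000000 in
private lemma aux_main (α θ : ℝ) (hα0 : 0 < α) (hα1 : α < 1)
    (hθ1 : π / 2 ≤ θ) (hθ2 : θ < π)
    (z : ℂ) (hz : z ≠ 0) (him : 0 ≤ z.im) (harg : z.arg ≤ θ) :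
    (z + 1) ^ (α : ℂ) - 1 = 0 ∨ |((z + 1) ^ (α : ℂ) - 1).arg| ≤ θ := by
  have hθ0 : 0 < θ := lt_of_lt_of_le (by positivity) hθ1
  rcases eq_or_lt_of_le him with hy0 | hy
  · -- z is a positive real
    have hrepos : 0 < z.re := by
      rcases lt_trichotomy z.re 0 with h | h | h
      · exfalso
        have : z.arg = π := Complex.arg_eq_pi_iff.mpr ⟨h, hy0.symm⟩
        linarith [this ▸ harg]
      · exact absurd (Complex.ext (by simp [h]) (by simp [← hy0])) hz
      · exact h
    have h1 : z + 1 = (((z.re + 1 : ℝ)) : ℂ) := by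
      apply Complex.ext <;> simp [← hy0]
    have h2 : (z + 1) ^ (α : ℂ) = (((z.re + 1) ^ α : ℝ) : ℂ) := by
      rw [h1, Complex.ofReal_cpow (by linarith)]
    have h3 : (1:ℝ) < (z.re + 1) ^ α :=
      Real.one_lt_rpow_iff_of_pos (by linarith) |>.mpr (Or.inl ⟨by linarith, hα0⟩)
    right
    have h4 : (z + 1) ^ (α : ℂ) - 1 = (((z.re + 1) ^ α - 1 : ℝ) : ℂ) := by
      rw [h2]; push_cast; ring
    rw [h4, Complex.arg_ofReal_of_nonneg (by linarith), abs_zero]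
    exact hθ0.le
  · -- main case: z.im > 0
    have hwim : (z + 1).im = z.im := by simp
    have hwre : (z + 1).re = z.re + 1 := by simp
    have hwne : z + 1 ≠ 0 := by
      intro h
      have : (z + 1).im = 0 := by rw [h]; simp
      rw [hwim] at this; linarith
    obtain ⟨hure, huim⟩ := aux_cpow_re_im (z + 1) hwne α
    set φ := z.arg with hφ
    set β := (z + 1).arg with hβ
    set R := ‖z + 1‖ with hRdef
    have hφ0 : 0 < φ := by
      rcases lt_or_eq_of_le (Complex.arg_nonneg_iff.mpr him) with h | h
      · exact h
      · exfalso; have := (Complex.arg_eq_zero_iff.mp h.symm).2; linarith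
    have hφπ : φ < π := lt_of_le_of_lt harg hθ2
    have hβ0 : 0 < β := by
      rcases lt_or_eq_of_le (Complex.arg_nonneg_iff.mpr (by rw [hwim]; exact him)) with h | h
      · exact h
      · exfalso; have := (Complex.arg_eq_zero_iff.mp h.symm).2; rw [hwim] at this; linarith
    have hβπ : β < π := by
      rcases lt_or_eq_of_le (Complex.arg_le_pi (z + 1)) with h | h
      · exact h
      · exfalso; have := (Complex.arg_eq_pi_iff.mp h).2; rw [hwim] at this; linarith
    have hr : (0:ℝ) < ‖z‖ := norm_pos_iff.mpr hz
    have hR : (0:ℝ) < R := norm_pos_iff.mpr hwne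
    -- key identity: R * sin (φ - β) = sin φ
    have hident : R * Real.sin (φ - β) = Real.sin φ := by
      rw [Real.sin_sub, hφ, hβ, Complex.sin_arg z, Complex.cos_arg hz,
        Complex.sin_arg (z + 1), Complex.cos_arg hwne, hwim, hwre]
      rw [← hRdef]
      field_simp
      ring
    have hsinφ : 0 < Real.sin φ := Real.sin_pos_of_pos_of_lt_pi hφ0 hφπ
    have hsinβ : 0 < Real.sin β := Real.sin_pos_of_pos_of_lt_pi hβ0 hβπ
    have hsφβ : 0 < Real.sin (φ - β) := by nlinarith
    have hβφ : β < φ := by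
      by_contra h
      push_neg at h
      have h1 : Real.sin (φ - β) ≤ 0 := by
        rcases eq_or_lt_of_le h with he | hlt
        · rw [← he, sub_self, Real.sin_zero]
        · exact le_of_lt (Real.sin_neg_of_neg_of_neg_pi_lt (by linarith) (by linarith))
      linarith
    have hβθ : β < θ := lt_of_lt_of_le hβφ harg
    have hαβ0 : 0 < α * β := mul_pos hα0 hβ0
    have hαβθ : α * β < θ := by nlinarith
    -- the main inequality chain
    have hsθ : 0 < Real.sin θ := Real.sin_pos_of_pos_of_lt_pi hθ0 hθ2
    have hsθβ : 0 < Real.sin (θ - β) :=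
      Real.sin_pos_of_pos_of_lt_pi (by linarith) (by linarith)
    have hsθαβ : 0 < Real.sin (θ - α * β) :=
      Real.sin_pos_of_pos_of_lt_pi (by linarith) (by linarith)
    have hA : Real.sin θ * Real.sin (φ - β) ≤ Real.sin φ * Real.sin (θ - β) := by
      have hexp : Real.sin φ * Real.sin (θ - β) - Real.sin θ * Real.sin (φ - β)
          = Real.sin β * Real.sin (θ - φ) := by
        rw [Real.sin_sub, Real.sin_sub, Real.sin_sub]; ring
      have h0 : 0 ≤ Real.sin β * Real.sin (θ - φ) :=
        mul_nonneg hsinβ.le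
          (Real.sin_nonneg_of_nonneg_of_le_pi (by linarith) (by linarith))
      linarith
    have hB : Real.sin θ ≤ R * Real.sin (θ - β) := by nlinarith
    have hC : Real.sin θ ^ (1 - α) * Real.sin (θ - β) ^ α ≤ Real.sin (θ - α * β) := by
      have g := Real.geom_mean_le_arith_mean2_weighted (by linarith : (0:ℝ) ≤ 1 - α)
        hα0.le hsθ.le hsθβ.le (by ring)
      have hm1 : θ ∈ Set.Icc (0:ℝ) π := ⟨hθ0.le, hθ2.le⟩
      have hm2 : θ - β ∈ Set.Icc (0:ℝ) π := ⟨by linarith, by linarith⟩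
      have cc : (1 - α) • Real.sin θ + α • Real.sin (θ - β)
          ≤ Real.sin ((1 - α) • θ + α • (θ - β)) :=
        strictConcaveOn_sin_Icc.concaveOn.2 hm1 hm2 (by linarith) hα0.le (by ring)
      simp only [smul_eq_mul] at cc
      have heq : (1 - α) * θ + α * (θ - β) = θ - α * β := by ring
      rw [heq] at cc
      linarith
    have hD : Real.sin θ ≤ R ^ α * Real.sin (θ - α * β) := by
      have h1 : (Real.sin θ / Real.sin (θ - β)) ^ α ≤ R ^ α :=
        Real.rpow_le_rpow (by positivity) ((div_le_iff₀ hsθβ).mpr hB) hα0.le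
      have h2 : Real.sin θ ^ α * Real.sin θ ^ (1 - α) = Real.sin θ := by
        rw [← Real.rpow_add hsθ]; norm_num
      have hbne : Real.sin (θ - β) ^ α ≠ 0 := ne_of_gt (Real.rpow_pos_of_pos hsθβ α)
      have e : (Real.sin θ / Real.sin (θ - β)) ^ α
          * (Real.sin θ ^ (1 - α) * Real.sin (θ - β) ^ α) = Real.sin θ := by
        rw [Real.div_rpow hsθ.le hsθβ.le]
        have hrear : Real.sin θ ^ α / Real.sin (θ - β) ^ α
            * (Real.sin θ ^ (1 - α) * Real.sin (θ - β) ^ α)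
            = Real.sin θ ^ α * Real.sin θ ^ (1 - α)
              * (Real.sin (θ - β) ^ α / Real.sin (θ - β) ^ α) := by ring
        rw [hrear, div_self hbne, h2, mul_one]
      calc Real.sin θ
          = (Real.sin θ / Real.sin (θ - β)) ^ α
            * (Real.sin θ ^ (1 - α) * Real.sin (θ - β) ^ α) := e.symm
        _ ≤ (Real.sin θ / Real.sin (θ - β)) ^ α * Real.sin (θ - α * β) :=
            mul_le_mul_of_nonneg_left hC (by positivity)
        _ ≤ R ^ α * Real.sin (θ - α * β) :=
            mul_le_mul_of_nonneg_right h1 hsθαβ.le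
    -- conclude
    have hvim : ((z + 1) ^ (α : ℂ) - 1).im = R ^ α * Real.sin (α * β) := by
      rw [Complex.sub_im, Complex.one_im, huim]; ring
    have hvre : ((z + 1) ^ (α : ℂ) - 1).re = R ^ α * Real.cos (α * β) - 1 := by
      rw [Complex.sub_re, Complex.one_re, hure]
    have hvimpos : 0 < ((z + 1) ^ (α : ℂ) - 1).im := by
      rw [hvim]
      exact mul_pos (Real.rpow_pos_of_pos hR α)
        (Real.sin_pos_of_pos_of_lt_pi hαβ0 (by linarith))
    have hvne : (z + 1) ^ (α : ℂ) - 1 ≠ 0 := by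
      intro h; rw [h] at hvimpos; simp at hvimpos
    have hcross : 0 ≤ Real.sin θ * ((z + 1) ^ (α : ℂ) - 1).re
        - Real.cos θ * ((z + 1) ^ (α : ℂ) - 1).im := by
      have heq : Real.sin θ * ((z + 1) ^ (α : ℂ) - 1).re
          - Real.cos θ * ((z + 1) ^ (α : ℂ) - 1).im
          = R ^ α * Real.sin (θ - α * β) - Real.sin θ := by
        rw [hvre, hvim, Real.sin_sub]; ring
      linarith
    right
    have hargv := aux_arg_le_of_cross θ hθ0 hθ2 _ hvne hvimpos.le hcross
    rw [_root_.abs_of_nonneg (Complex.arg_nonneg_iff.mpr hvimpos.le)]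
    exact hargv

/-- For z in the sector Σ_θ (θ ∈ [π/2, π)), ((z+1)^α - 1) ∈ Σ_θ ∪ {0}. -/
theorem stmt_2 (α θ : ℝ) (hα0 : 0 < α) (hα1 : α < 1)
    (hθ1 : π / 2 ≤ θ) (hθ2 : θ < π)
    (z : ℂ) (hz : z ≠ 0) (harg : |z.arg| ≤ θ) :
    (z + 1) ^ (α : ℂ) - 1 = 0 ∨ |((z + 1) ^ (α : ℂ) - 1).arg| ≤ θ := by
  rcases le_or_gt 0 z.im with him | him
  · exact aux_main α θ hα0 hα1 hθ1 hθ2 z hz him (le_of_abs_le harg)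
  · -- conjugate case
    have hargzπ : z.arg ≠ π := by
      intro h
      rw [h, abs_of_pos Real.pi_pos] at harg
      linarith
    have hz' : (starRingEnd ℂ) z ≠ 0 := by simpa using hz
    have him' : 0 ≤ ((starRingEnd ℂ) z).im := by
      simp only [Complex.conj_im]; linarith
    have harg' : ((starRingEnd ℂ) z).arg ≤ θ := by
      rw [Complex.arg_conj, if_neg hargzπ]
      calc -z.arg ≤ |z.arg| := neg_le_abs _
        _ ≤ θ := harg
    have hargw : (z + 1).arg ≠ π := by
      intro h
      have h2 := (Complex.arg_eq_pi_iff.mp h).2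
      simp at h2
      linarith
    have hkey : ((starRingEnd ℂ) z + 1) ^ (α : ℂ) - 1
        = (starRingEnd ℂ) ((z + 1) ^ (α : ℂ) - 1) := by
      have h1 : (starRingEnd ℂ) z + 1 = (starRingEnd ℂ) (z + 1) := by
        rw [map_add, map_one]
      rw [h1, map_sub, map_one, Complex.conj_cpow _ _ hargw, Complex.conj_ofReal]
    rcases aux_main α θ hα0 hα1 hθ1 hθ2 _ hz' him' harg' with h | h
    · left
      rw [hkey] at h
      exact star_eq_zero.mp h
    · right
      rw [hkey] at h
      by_cases hπ : ((z + 1) ^ (α : ℂ) - 1).arg = π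
      · exfalso
        rw [Complex.arg_conj, if_pos hπ, abs_of_pos Real.pi_pos] at h
        linarith
      · rwa [Complex.arg_conj, if_neg hπ, abs_neg] at h
end

section
/- Let 0 < α < 1, λ > 0, and θ ∈ [π/2, π). For every z ∈ Σ_θ (i.e., z ≠ 0 and |arg z| ≤ θ), the quantity (z + λ)^α - λ^α lies in Σ_θ ∪ {0}. -/
open Real Complex

lemma im_re_mul_exp (r x : ℝ) : ((r:ℂ) * Complex.exp ((x:ℂ) * I)).im = r * Real.sin x := by
  rw [Complex.exp_mul_I]
  simp [← Complex.ofReal_sin, ← Complex.ofReal_cos]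

lemma mul_polar (r s x y : ℝ) :
    ((r:ℂ) * Complex.exp ((x:ℂ) * I)) * ((s:ℂ) * Complex.exp ((y:ℂ) * I))
      = ((r*s : ℝ):ℂ) * Complex.exp (((x+y : ℝ):ℂ) * I) := by
  push_cast
  rw [add_mul, Complex.exp_add]
  ring

lemma cpow_real_eq (w : ℂ) (hw : w ≠ 0) (c : ℝ) :
    w ^ (c:ℂ) = ((‖w‖ ^ c : ℝ) : ℂ) * Complex.exp (((c * w.arg : ℝ):ℂ) * I) := by
  rw [Complex.cpow_def_of_ne_zero hw, Real.rpow_def_of_pos (norm_pos_iff.mpr hw),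
    Complex.ofReal_exp, ← Complex.exp_add, Complex.log]
  congr 1
  push_cast
  ring

lemma w_facts (lam : ℝ) (hlam : 0 < lam) (z : ℂ) (hz : z ≠ 0) (h0 : 0 ≤ z.arg)
    (hπ : z.arg < π) (t : ℝ) (ht : 0 ≤ t) :
    ((lam:ℂ) + (t:ℂ) * z) ∈ Complex.slitPlane ∧ 0 ≤ ((lam:ℂ) + (t:ℂ) * z).arg ∧
      ((lam:ℂ) + (t:ℂ) * z).arg ≤ z.arg := by
  have him : 0 ≤ z.im := Complex.arg_nonneg_iff.mp h0
  set w : ℂ := (lam:ℂ) + (t:ℂ) * z with hw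
  have hwim : w.im = t * z.im := by simp [hw]
  have hwre : w.re = lam + t * z.re := by simp [hw]
  have hslit : w ∈ Complex.slitPlane := by
    rcases eq_or_lt_of_le him with h | h
    · have hre : 0 < z.re := by
        have h1 : ¬ (z.re < 0 ∧ z.im = 0) := by
          rw [← Complex.arg_eq_pi_iff]; exact ne_of_lt hπ
        have h2 : z.re ≠ 0 := by
          intro h2
          exact hz (Complex.ext (by simp [h2]) (by simp [← h]))
        rcases lt_trichotomy z.re 0 with h3 | h3 | h3
        · exact absurd ⟨h3, h.symm⟩ h1
        · exact absurd h3 h2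
        · exact h3
      exact Or.inl (by rw [hwre]; positivity)
    · rcases eq_or_lt_of_le ht with h2 | h2
      · exact Or.inl (by rw [hwre, ← h2]; simpa using hlam)
      · exact Or.inr (by rw [hwim]; positivity)
  refine ⟨hslit, Complex.arg_nonneg_iff.mpr (by rw [hwim]; positivity), ?_⟩
  by_contra hlt
  push_neg at hlt
  have hwne : w ≠ 0 := (Complex.mem_slitPlane_iff_arg.mp hslit).2
  have hψπ : w.arg ≠ π := (Complex.mem_slitPlane_iff_arg.mp hslit).1
  have hψltπ : w.arg < π := lt_of_le_of_ne (Complex.arg_le_pi w) hψπ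
  have hargconj : (starRingEnd ℂ z).arg = -z.arg := by
    rw [Complex.arg_conj]
    exact if_neg (ne_of_lt hπ)
  have h2 : w * (starRingEnd ℂ) z
      = ((‖w‖ * ‖z‖ : ℝ):ℂ)
        * Complex.exp (((w.arg + -z.arg : ℝ):ℂ) * I) := by
    conv_lhs => rw [← Complex.norm_mul_exp_arg_mul_I w,
      ← Complex.norm_mul_exp_arg_mul_I ((starRingEnd ℂ) z)]
    rw [hargconj, Complex.norm_conj]
    exact mul_polar _ _ _ _
  have h1 : (w * (starRingEnd ℂ) z).im = -lam * z.im := by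
    simp only [Complex.mul_im, Complex.conj_re, Complex.conj_im, hwim, hwre]
    ring
  have h3 : (w * (starRingEnd ℂ) z).im
      = ‖w‖ * ‖z‖ * Real.sin (w.arg + -z.arg) := by
    rw [h2, im_re_mul_exp]
  have hsin : 0 < Real.sin (w.arg + -z.arg) :=
    Real.sin_pos_of_pos_of_lt_pi (by linarith) (by linarith)
  have habsw : 0 < ‖w‖ := norm_pos_iff.mpr hwne
  have habsz : 0 < ‖z‖ := norm_pos_iff.mpr hz
  nlinarith [mul_pos (mul_pos habsw habsz) hsin]

lemma key_nonneg (α lam θ : ℝ) (hα0 : 0 < α) (hα1 : α < 1) (hlam : 0 < lam)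
    (hθ0 : 0 < θ) (hθ2 : θ < π)
    (z : ℂ) (hz : z ≠ 0) (h0 : 0 ≤ z.arg) (hzθ : z.arg ≤ θ) :
    (z + (lam : ℂ)) ^ (α : ℂ) - ((lam : ℂ)) ^ (α : ℂ) = 0 ∨
      |((z + (lam : ℂ)) ^ (α : ℂ) - ((lam : ℂ)) ^ (α : ℂ)).arg| ≤ θ := by
  have hφπ : z.arg < π := lt_of_le_of_lt hzθ hθ2
  set φ := z.arg with hφ
  set W : ℝ → ℂ := fun t => (lam:ℂ) + (t:ℂ) * z with hW
  set G : ℝ → ℂ := fun t => (α:ℂ) * (W t) ^ ((α:ℂ)-1) * z with hG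
  set T : ℂ := (z + (lam : ℂ)) ^ (α : ℂ) - ((lam : ℂ)) ^ (α : ℂ) with hT
  have hWf : ∀ t : ℝ, 0 ≤ t → W t ∈ Complex.slitPlane ∧ 0 ≤ (W t).arg ∧ (W t).arg ≤ φ :=
    fun t ht => w_facts lam hlam z hz h0 hφπ t ht
  -- derivative
  have hderiv : ∀ t ∈ Set.uIcc (0:ℝ) 1, HasDerivAt (fun s => W s ^ (α:ℂ)) (G t) t := by
    intro t ht
    rw [Set.uIcc_of_le zero_le_one] at ht
    have h1 : HasDerivAt (fun s : ℂ => (lam:ℂ) + s * z) z ((t:ℝ):ℂ) := by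
      simpa using ((hasDerivAt_id ((t:ℝ):ℂ)).mul_const z).const_add (lam:ℂ)
    have h2 := (h1.cpow_const (c := (α:ℂ)) ((hWf t ht.1).1)).comp_ofReal
    exact h2
  -- integrability
  have hWc : ContinuousOn W (Set.uIcc (0:ℝ) 1) :=
    (continuous_const.add (Complex.continuous_ofReal.mul continuous_const)).continuousOn
  have hGc : ContinuousOn G (Set.uIcc (0:ℝ) 1) := by
    apply ContinuousOn.mul _ continuousOn_const
    apply ContinuousOn.mul continuousOn_const
    apply hWc.cpow_const
    intro t ht
    rw [Set.uIcc_of_le zero_le_one] at ht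
    exact (hWf t ht.1).1
  have hGi : IntervalIntegrable G MeasureTheory.volume 0 1 := hGc.intervalIntegrable
  -- FTC
  have hTval : T = ∫ t in (0:ℝ)..1, G t := by
    rw [intervalIntegral.integral_eq_sub_of_hasDerivAt hderiv hGi, hT, hW]
    norm_num [add_comm]
  -- pointwise polar form of G
  have hGeq : ∀ t : ℝ, 0 ≤ t → G t
      = ((α * (‖W t‖ ^ (α-1) * ‖z‖) : ℝ):ℂ)
        * Complex.exp ((((α-1) * (W t).arg + φ : ℝ):ℂ) * I) := by
    intro t ht
    have hwne : W t ≠ 0 := (Complex.mem_slitPlane_iff_arg.mp (hWf t ht).1).2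
    have e1 : ((α:ℂ)-1) = ((α - 1 : ℝ) : ℂ) := by push_cast; ring
    calc G t = (α:ℂ) * ((W t) ^ ((α:ℂ)-1) * z) := by rw [hG]; ring
      _ = (α:ℂ) * ((((‖W t‖ ^ (α-1) : ℝ):ℂ)
            * Complex.exp ((((α-1) * (W t).arg : ℝ):ℂ) * I))
          * (((‖z‖ : ℝ):ℂ) * Complex.exp ((φ:ℂ) * I))) := by
          rw [e1, cpow_real_eq (W t) hwne (α-1)]
          congr 1
          congr 1
          exact (Complex.norm_mul_exp_arg_mul_I z).symm
      _ = (α:ℂ) * (((‖W t‖ ^ (α-1) * ‖z‖ : ℝ):ℂ)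
            * Complex.exp ((((α-1) * (W t).arg + φ : ℝ):ℂ) * I)) := by
          rw [mul_polar]
      _ = _ := by push_cast; ring
  -- pointwise imaginary part bounds
  have him1 : ∀ t ∈ Set.Icc (0:ℝ) 1, 0 ≤ (G t).im := by
    intro t ht
    rw [hGeq t ht.1, im_re_mul_exp]
    have hψ := hWf t ht.1
    have hψ0 := hψ.2.1
    have hψφ := hψ.2.2
    have hs : 0 ≤ Real.sin ((α-1) * (W t).arg + φ) := by
      apply Real.sin_nonneg_of_nonneg_of_le_pi
      · nlinarith
      · nlinarith
    have hc : 0 ≤ α * (‖W t‖ ^ (α-1) * ‖z‖) := by positivity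
    exact mul_nonneg hc hs
  have him2 : ∀ t ∈ Set.Icc (0:ℝ) 1,
      (G t * Complex.exp (((-θ : ℝ):ℂ) * I)).im ≤ 0 := by
    intro t ht
    rw [hGeq t ht.1,
      show Complex.exp (((-θ : ℝ):ℂ) * I) = ((1:ℝ):ℂ) * Complex.exp (((-θ : ℝ):ℂ) * I) by
        rw [Complex.ofReal_one, one_mul],
      mul_polar, im_re_mul_exp]
    have hψ := hWf t ht.1
    have hψ0 := hψ.2.1
    have hψφ := hψ.2.2
    have hs : Real.sin ((α-1) * (W t).arg + φ + -θ) ≤ 0 := by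
      apply Real.sin_nonpos_of_nonpos_of_neg_pi_le
      · nlinarith
      · nlinarith
    have hc : 0 ≤ α * (‖W t‖ ^ (α-1) * ‖z‖) * 1 := by positivity
    exact mul_nonpos_iff.mpr (Or.inl ⟨hc, hs⟩)
  -- integrate
  have himT : 0 ≤ T.im := by
    rw [hTval, intervalIntegral.integral_of_le zero_le_one]
    rw [show (∫ x in Set.Ioc (0:ℝ) 1, G x).im
        = ∫ x in Set.Ioc (0:ℝ) 1, (G x).im from by
      rw [← RCLike.im_eq_complex_im]; exact (integral_im hGi.1).symm]
    exact MeasureTheory.setIntegral_nonneg measurableSet_Ioc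
      (fun t htt => him1 t ⟨htt.1.le, htt.2⟩)
  have himTθ : (T * Complex.exp (((-θ : ℝ):ℂ) * I)).im ≤ 0 := by
    have h5 : T * Complex.exp (((-θ : ℝ):ℂ) * I)
        = ∫ t in (0:ℝ)..1, G t * Complex.exp (((-θ : ℝ):ℂ) * I) := by
      rw [hTval, ← intervalIntegral.integral_mul_const]
    rw [h5, intervalIntegral.integral_of_le zero_le_one]
    rw [show (∫ x in Set.Ioc (0:ℝ) 1, G x * Complex.exp (((-θ : ℝ):ℂ) * I)).im
        = ∫ x in Set.Ioc (0:ℝ) 1, (G x * Complex.exp (((-θ : ℝ):ℂ) * I)).im from by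
      rw [← RCLike.im_eq_complex_im]; exact (integral_im (hGi.mul_const _).1).symm]
    exact MeasureTheory.setIntegral_nonpos measurableSet_Ioc
      (fun t htt => him2 t ⟨htt.1.le, htt.2⟩)
  -- conclude
  by_cases hT0 : T = 0
  · exact Or.inl hT0
  right
  have harg0 : 0 ≤ T.arg := Complex.arg_nonneg_iff.mpr himT
  have hargpi : T.arg ≤ π := Complex.arg_le_pi T
  have hple : T.arg ≤ θ := by
    by_contra h
    push_neg at h
    have habs : 0 < ‖T‖ := norm_pos_iff.mpr hT0
    have h6 : T * Complex.exp (((-θ : ℝ):ℂ) * I)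
        = ((‖T‖ * 1 : ℝ):ℂ) * Complex.exp (((T.arg + -θ : ℝ):ℂ) * I) := by
      conv_lhs => rw [← Complex.norm_mul_exp_arg_mul_I T,
        show Complex.exp (((-θ : ℝ):ℂ) * I) = ((1:ℝ):ℂ) * Complex.exp (((-θ : ℝ):ℂ) * I) by
          rw [Complex.ofReal_one, one_mul]]
      exact mul_polar _ _ _ _
    rw [h6, im_re_mul_exp] at himTθ
    have hs : 0 < Real.sin (T.arg + -θ) :=
      Real.sin_pos_of_pos_of_lt_pi (by linarith) (by linarith)
    nlinarith
  exact abs_le.mpr ⟨by linarith, hple⟩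

/-- For z ∈ Σ_θ, λ > 0, 0 < α < 1, the quantity (z+λ)^α - λ^α lies in Σ_θ ∪ {0}. -/
theorem stmt_3 (α lam θ : ℝ) (hα0 : 0 < α) (hα1 : α < 1) (hlam : 0 < lam)
    (hθ1 : π / 2 ≤ θ) (hθ2 : θ < π)
    (z : ℂ) (hz : z ≠ 0) (harg : |z.arg| ≤ θ) :
    (z + (lam : ℂ)) ^ (α : ℂ) - ((lam : ℂ)) ^ (α : ℂ) = 0 ∨
      |((z + (lam : ℂ)) ^ (α : ℂ) - ((lam : ℂ)) ^ (α : ℂ)).arg| ≤ θ := by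
  have hθ0 : 0 < θ := lt_of_lt_of_le (by positivity) hθ1
  obtain ⟨harg1, harg2⟩ := abs_le.mp harg
  by_cases h0 : 0 ≤ z.arg
  · exact key_nonneg α lam θ hα0 hα1 hlam hθ0 hθ2 z hz h0 harg2
  push_neg at h0
  have hzim : z.im < 0 := Complex.arg_neg_iff.mp h0
  set z' : ℂ := (starRingEnd ℂ) z with hz'
  have hz'ne : z' ≠ 0 := by simpa [hz'] using hz
  have hargz' : z'.arg = -z.arg := by
    rw [hz', Complex.arg_conj]
    exact if_neg (by linarith [Real.pi_pos, h0] : z.arg ≠ π)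
  have h0' : 0 ≤ z'.arg := by rw [hargz']; linarith
  have hθ' : z'.arg ≤ θ := by rw [hargz']; linarith
  have hres := key_nonneg α lam θ hα0 hα1 hlam hθ0 hθ2 z' hz'ne h0' hθ'
  -- relate T' to conj T
  have hargsum : (z + (lam:ℂ)).arg ≠ π := by
    intro h
    have := (Complex.arg_eq_pi_iff.mp h).2
    simp only [Complex.add_im, Complex.ofReal_im, add_zero] at this
    linarith
  have harglam : ((lam:ℂ)).arg ≠ π := by
    rw [Complex.arg_ofReal_of_nonneg hlam.le]
    exact (Real.pi_pos.ne)
  have hconj1 : (z' + (lam:ℂ)) ^ (α:ℂ)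
      = (starRingEnd ℂ) ((z + (lam:ℂ)) ^ (α:ℂ)) := by
    have e : z' + (lam:ℂ) = (starRingEnd ℂ) (z + (lam:ℂ)) := by
      rw [map_add, Complex.conj_ofReal]
    rw [e, Complex.conj_cpow _ _ hargsum, Complex.conj_ofReal]
  have hconj2 : ((lam:ℂ)) ^ (α:ℂ) = (starRingEnd ℂ) (((lam:ℂ)) ^ (α:ℂ)) := by
    conv_lhs => rw [show (lam:ℂ) = (starRingEnd ℂ) (lam:ℂ) from (Complex.conj_ofReal lam).symm]
    rw [Complex.conj_cpow _ _ harglam, Complex.conj_ofReal]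
  have hTT : (z' + (lam:ℂ)) ^ (α:ℂ) - ((lam:ℂ)) ^ (α:ℂ)
      = (starRingEnd ℂ) ((z + (lam:ℂ)) ^ (α:ℂ) - ((lam:ℂ)) ^ (α:ℂ)) := by
    rw [map_sub, ← hconj1, ← hconj2]
  rw [hTT] at hres
  rcases hres with h | h
  · refine Or.inl ?_
    have := congrArg (starRingEnd ℂ) h
    simpa using this
  · right
    rw [Complex.arg_conj] at h
    split_ifs at h with hpi
    · rw [abs_of_pos Real.pi_pos] at h
      linarith
    · rwa [abs_neg] at h
end

section
/- Let 0 < α < 1, λ ≥ 0, and let c_ε > 0. There exists a constant C > 0 such that for every complex number z_ε with |z_ε| ≥ c_ε and |arg z_ε| ≤ θ for some fixed θ < π, one has |(λ + z_ε)^α - λ^α| ≥ C |z_ε|^α. -/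
open Real Complex

/-- Lower bound |(λ + z_ε)^α - λ^α| ≥ C |z_ε|^α on a sector, away from the origin. -/
theorem stmt_5 (α lam cε θ : ℝ) (hα0 : 0 < α) (hα1 : α < 1)
    (hlam : 0 ≤ lam) (hcε : 0 < cε) (hθ : θ < π) :
    ∃ C > 0, ∀ z : ℂ, cε ≤ ‖z‖ → |z.arg| ≤ θ →
      C * (‖z‖) ^ α ≤
        ‖((lam : ℂ) + z) ^ (α : ℂ) - ((lam : ℂ)) ^ (α : ℂ)‖ := by
  have hπ := Real.pi_pos
  set θ' : ℝ := max θ 0 with hθ'def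
  have hθ'0 : 0 ≤ θ' := le_max_right _ _
  have hθ'π : θ' < π := max_lt hθ hπ
  have hcosθ' : -1 < Real.cos θ' := by
    have := Real.strictAntiOn_cos (Set.mem_Icc.2 ⟨hθ'0, hθ'π.le⟩)
      (Set.mem_Icc.2 ⟨hπ.le, le_rfl⟩) hθ'π
    simpa [Real.cos_pi] using this
  set M : ℝ := max 4 ((4:ℝ) ^ (α⁻¹)) with hMdef
  have hM4 : (4:ℝ) ≤ M := le_max_left _ _
  have hM0 : (0:ℝ) < M := by linarith
  set R : ℝ := M * lam with hRdef
  have hR0 : 0 ≤ R := mul_nonneg hM0.le hlam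
  have hαC : (α:ℂ) ≠ 0 := by exact_mod_cast hα0.ne'
  -- injectivity : (lam + z)^α ≠ lam^α for z ≠ 0
  have inj : ∀ w : ℂ, w ≠ 0 → ((lam:ℂ)+w)^(α:ℂ) - (lam:ℂ)^(α:ℂ) ≠ 0 := by
    intro w hw heq
    have heq' : ((lam:ℂ)+w)^(α:ℂ) = (lam:ℂ)^(α:ℂ) := by
      have := sub_eq_zero.mp heq; exact this
    have key : ∀ x : ℂ, x ^ ((α:ℂ) * ((α:ℂ)⁻¹)) = (x ^ (α:ℂ)) ^ ((α:ℂ)⁻¹) := by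
      intro x
      have him : (Complex.log x * (α:ℂ)).im = x.arg * α := by
        simp [Complex.mul_im, Complex.log_im]
      refine Complex.cpow_mul _ ?_ ?_ <;> rw [him]
      · nlinarith [Complex.neg_pi_lt_arg x, Complex.arg_le_pi x]
      · nlinarith [Complex.neg_pi_lt_arg x, Complex.arg_le_pi x]
    have hinv : (α:ℂ) * ((α:ℂ)⁻¹) = 1 := mul_inv_cancel₀ hαC
    have e1 := key ((lam:ℂ)+w)
    have e2 := key (lam:ℂ)
    rw [hinv, Complex.cpow_one] at e1 e2
    have hle : (lam:ℂ) + w = (lam:ℂ) := by rw [e1, heq', ← e2]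
    exact hw (by simpa using hle)
  -- case 1 : |z| ≥ R
  have case1 : ∀ z : ℂ, cε ≤ ‖z‖ → R ≤ ‖z‖ →
      (1/2) * (‖z‖)^α ≤
        ‖((lam:ℂ)+z)^(α:ℂ) - (lam:ℂ)^(α:ℂ)‖ := by
    intro z hz hRz
    set t := ‖z‖ with htdef
    have ht : 0 < t := lt_of_lt_of_le hcε hz
    have htα : (0:ℝ) < t ^ α := Real.rpow_pos_of_pos ht α
    have hlamt : lam ≤ t / M := by
      rw [le_div_iff₀ hM0]; calc lam * M = R := by rw [hRdef]; ring
        _ ≤ t := hRz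
    have htM : 0 < t / M := div_pos ht hM0
    have h1 : t - lam ≤ ‖(lam:ℂ)+z‖ := by
      have := norm_sub_norm_le z (-(lam:ℂ))
      simp only [sub_neg_eq_add, norm_neg, Complex.norm_real,
        Real.norm_eq_abs, _root_.abs_of_nonneg hlam] at this
      calc t - lam ≤ ‖z‖ - lam := by rw [htdef]
        _ ≤ ‖z + (lam:ℂ)‖ := this
        _ = ‖(lam:ℂ) + z‖ := by rw [add_comm]
    have habs1 : ‖((lam:ℂ)+z)^(α:ℂ)‖ = (‖(lam:ℂ)+z‖) ^ α :=
      Complex.norm_cpow_real _ _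
    have habs2 : ‖(lam:ℂ)^(α:ℂ)‖ = lam ^ α := by
      rw [← Complex.ofReal_cpow hlam, Complex.norm_real, Real.norm_eq_abs,
        _root_.abs_of_nonneg (Real.rpow_nonneg hlam α)]
    have hlow : (t - lam) ^ α - lam ^ α ≤
        ‖((lam:ℂ)+z)^(α:ℂ) - (lam:ℂ)^(α:ℂ)‖ := by
      have h2 : ‖((lam:ℂ)+z)^(α:ℂ)‖ - ‖(lam:ℂ)^(α:ℂ)‖ ≤
          ‖((lam:ℂ)+z)^(α:ℂ) - (lam:ℂ)^(α:ℂ)‖ := by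
        have := norm_sub_norm_le (((lam:ℂ)+z)^(α:ℂ)) ((lam:ℂ)^(α:ℂ))
        exact this
      have h3 : (t - lam) ^ α ≤ (‖(lam:ℂ)+z‖) ^ α :=
        Real.rpow_le_rpow (by linarith [hlamt, htM.le, div_le_self ht.le (by linarith : (1:ℝ) ≤ M)]) h1 hα0.le
      rw [habs1, habs2] at h2
      linarith
    -- (t - lam)^α ≥ t^α * (1 - 1/M)  and lam^α ≤ t^α * (1/4)
    have hMinv : (0:ℝ) < 1 - 1/M := by
      have : 1/M ≤ 1/4 := by apply one_div_le_one_div_of_le <;> linarith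
      linarith
    have e4 : t - t/M ≤ t - lam := by linarith
    have e5 : (t * (1 - 1/M)) ^ α ≤ (t - lam) ^ α := by
      apply Real.rpow_le_rpow (by positivity) _ hα0.le
      calc t * (1 - 1/M) = t - t/M := by ring
        _ ≤ t - lam := e4
    have e6 : t ^ α * (1 - 1/M) ^ α = (t * (1 - 1/M)) ^ α :=
      (Real.mul_rpow ht.le hMinv.le).symm
    have e7 : (1 - 1/M) ≤ (1 - 1/M) ^ α := by
      have := Real.rpow_le_rpow_of_exponent_ge hMinv (by
        have : (1:ℝ)/M > 0 := by positivity
        linarith) hα1.le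
      simpa [Real.rpow_one] using this
    have hM14 : 1/M ≤ 1/4 := by apply one_div_le_one_div_of_le <;> linarith
    -- lam^α ≤ (t/M)^α ≤ t^α / 4
    have e8 : lam ^ α ≤ (t/M) ^ α := Real.rpow_le_rpow hlam hlamt hα0.le
    have hMbig : (4:ℝ) ^ (α⁻¹) ≤ M := le_max_right _ _
    have h4pos : (0:ℝ) < (4:ℝ) ^ (α⁻¹) := Real.rpow_pos_of_pos (by norm_num) _
    have e9 : (1/M) ^ α ≤ (1:ℝ)/4 := by
      have s1 : (1/M : ℝ) ≤ 1 / ((4:ℝ) ^ (α⁻¹)) :=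
        one_div_le_one_div_of_le h4pos hMbig
      have s2 : ((1:ℝ)/M) ^ α ≤ ((1:ℝ) / ((4:ℝ) ^ (α⁻¹))) ^ α :=
        Real.rpow_le_rpow (by positivity) s1 hα0.le
      have s3 : ((1:ℝ) / ((4:ℝ) ^ (α⁻¹))) ^ α = 1/4 := by
        have h44 : ((4:ℝ) ^ (α⁻¹)) ^ α = 4 := by
          rw [← Real.rpow_mul (by norm_num : (0:ℝ) ≤ 4), inv_mul_cancel₀ hα0.ne',
            Real.rpow_one]
        rw [Real.div_rpow (by norm_num) h4pos.le, Real.one_rpow, h44]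
      rw [s3] at s2; exact s2
    have e10 : (t/M) ^ α = t ^ α * (1/M) ^ α := by
      rw [← Real.mul_rpow ht.le (by positivity)]; ring_nf
    have e11 : lam ^ α ≤ t ^ α * (1/4) := by
      calc lam ^ α ≤ (t/M) ^ α := e8
        _ = t ^ α * (1/M) ^ α := e10
        _ ≤ t ^ α * (1/4) := by
            apply mul_le_mul_of_nonneg_left e9 htα.le
    have e12 : t ^ α * (3/4) ≤ (t - lam) ^ α := by
      calc t ^ α * (3/4) ≤ t ^ α * (1 - 1/M) := by
            apply mul_le_mul_of_nonneg_left (by linarith) htα.le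
        _ ≤ t ^ α * (1 - 1/M) ^ α := mul_le_mul_of_nonneg_left e7 htα.le
        _ = (t * (1 - 1/M)) ^ α := e6
        _ ≤ (t - lam) ^ α := e5
    linarith
    -- sector condition implies the closed cone condition
  have hsec : ∀ z : ℂ, cε ≤ ‖z‖ → |z.arg| ≤ θ →
      ‖z‖ * Real.cos θ' ≤ z.re := by
    intro z hz harg
    have hz0 : z ≠ 0 := by
      intro h; rw [h, norm_zero] at hz; linarith
    have h1 : Real.cos θ' ≤ Real.cos |z.arg| :=
      Real.cos_le_cos_of_nonneg_of_le_pi (abs_nonneg _) hθ'π.le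
        (le_trans harg (le_max_left _ _))
    rw [Real.cos_abs] at h1
    have habs : 0 < ‖z‖ := lt_of_lt_of_le hcε hz
    calc ‖z‖ * Real.cos θ' ≤ ‖z‖ * Real.cos z.arg :=
        mul_le_mul_of_nonneg_left h1 habs.le
      _ = z.re := Complex.norm_mul_cos_arg z
  -- the shifted point lies in the slit plane
  have hslit : ∀ z : ℂ, cε ≤ ‖z‖ → ‖z‖ * Real.cos θ' ≤ z.re →
      ((lam:ℂ) + z) ∈ Complex.slitPlane := by
    intro z hz hs
    rw [Complex.mem_slitPlane_iff]
    by_cases him : z.im = 0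
    · left
      have hz0 : z ≠ 0 := by
        intro h; rw [h, norm_zero] at hz; linarith
      have hre : z.re ≠ 0 := by
        intro h; exact hz0 (Complex.ext h him)
      have habs : ‖z‖ = |z.re| := by
        rw [Complex.norm_def, Complex.normSq_apply, him]
        simp [← Real.sqrt_sq_eq_abs, sq]
      have hrepos : 0 < z.re := by
        rcases hre.lt_or_gt with h | h
        · exfalso
          rw [habs, abs_of_neg h] at hs
          nlinarith [hcosθ']
        · exact h
      simp only [Complex.add_re, Complex.ofReal_re]
      linarith
    · right
      simpa using him
  set K : Set ℂ := {z : ℂ | cε ≤ ‖z‖ ∧ ‖z‖ ≤ R ∧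
    ‖z‖ * Real.cos θ' ≤ z.re} with hKdef
  by_cases hKne : K.Nonempty
  · -- compact case
    have hKclosed : IsClosed K := by
      have hKeq : K = {z : ℂ | cε ≤ ‖z‖} ∩ ({z | ‖z‖ ≤ R} ∩
          {z | ‖z‖ * Real.cos θ' ≤ z.re}) := by
        ext w; simp [hKdef, Set.mem_setOf_eq, and_assoc]
      rw [hKeq]
      exact (isClosed_le continuous_const continuous_norm).inter
        ((isClosed_le continuous_norm continuous_const).inter
          (isClosed_le (continuous_norm.mul continuous_const) Complex.continuous_re))
    have hKbdd : Bornology.IsBounded K := by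
      apply (Metric.isBounded_closedBall (x := (0:ℂ)) (r := R)).subset
      intro w hw
      simp only [Metric.mem_closedBall, dist_zero_right]
      exact hw.2.1
    have hKcompact : IsCompact K := Metric.isCompact_of_isClosed_isBounded hKclosed hKbdd
    set F : ℂ → ℝ := fun w => ‖((lam:ℂ)+w)^(α:ℂ) - (lam:ℂ)^(α:ℂ)‖ with hF
    have hcont : ContinuousOn F K := by
      intro w hw
      apply ContinuousAt.continuousWithinAt
      have h1 : ContinuousAt (fun w : ℂ => ((lam:ℂ)+w)^(α:ℂ)) w := by
        have h2 := _root_.continuousAt_cpow_const (b := (α:ℂ)) (hslit w hw.1 hw.2.2)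
        exact h2.comp ((continuous_const.add continuous_id).continuousAt)
      exact (continuous_norm.continuousAt).comp (h1.sub continuousAt_const)
    obtain ⟨z₀, hz₀K, hz₀min⟩ := hKcompact.exists_isMinOn hKne hcont
    have hz₀ne : z₀ ≠ 0 := by
      intro h; rw [h] at hz₀K
      have := hz₀K.1; rw [norm_zero] at this; linarith
    have hz₀pos : 0 < F z₀ := norm_pos_iff.mpr (inj z₀ hz₀ne)
    have hRpos : 0 < R := lt_of_lt_of_le (lt_of_lt_of_le hcε hz₀K.1) hz₀K.2.1
    have hRα : 0 < R ^ α := Real.rpow_pos_of_pos hRpos α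
    refine ⟨min (1/2) (F z₀ / R ^ α), lt_min (by norm_num) (by positivity), ?_⟩
    intro z hz harg
    have hs := hsec z hz harg
    by_cases hzR : ‖z‖ ≤ R
    · have hzK : z ∈ K := ⟨hz, hzR, hs⟩
      have h1 : F z₀ ≤ F z := hz₀min hzK
      have h2 : (‖z‖) ^ α ≤ R ^ α :=
        Real.rpow_le_rpow (norm_nonneg z) hzR hα0.le
      calc min (1/2) (F z₀ / R^α) * (‖z‖)^α
          ≤ (F z₀ / R^α) * (‖z‖)^α :=
            mul_le_mul_of_nonneg_right (min_le_right _ _)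
              (Real.rpow_nonneg (norm_nonneg z) α)
        _ ≤ (F z₀ / R^α) * R^α :=
            mul_le_mul_of_nonneg_left h2 (by positivity)
        _ = F z₀ := by field_simp
        _ ≤ F z := h1
    · calc min (1/2) (F z₀ / R^α) * (‖z‖)^α
          ≤ (1/2) * (‖z‖)^α :=
            mul_le_mul_of_nonneg_right (min_le_left _ _)
              (Real.rpow_nonneg (norm_nonneg z) α)
        _ ≤ _ := case1 z hz (not_le.mp hzR).le
  · refine ⟨1/2, by norm_num, ?_⟩
    intro z hz harg
    apply case1 z hz
    by_contra hzR
    exact hKne ⟨z, hz, (not_le.mp hzR).le, hsec z hz harg⟩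
end

section
/- Let 0 < α < 1, τ > 0, λ > 0, r < 0 and s ∈ ℝ, and set b = τ(λ − r − is). The convolution quadrature weight d_0 = (1 + b)^α − (τλ)^α satisfies Re(d_0) > 0. -/
open Real Complex Set

-- concavity of log ∘ cos on (-π/2, π/2)
lemma concave_log_cos : ConcaveOn ℝ (Ioo (-(π/2)) (π/2)) (fun t => Real.log (Real.cos t)) := by
  have hint : interior (Ioo (-(π/2)) (π/2)) = Ioo (-(π/2)) (π/2) := isOpen_Ioo.interior_eq
  have hder : ∀ t ∈ Ioo (-(π/2)) (π/2),
      HasDerivAt (fun t => Real.log (Real.cos t)) (-Real.tan t) t := by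
    intro t ht
    have hc : 0 < Real.cos t := Real.cos_pos_of_mem_Ioo ht
    have := (Real.hasDerivAt_cos t).log hc.ne'
    simpa [Real.tan_eq_sin_div_cos, neg_div] using this
  refine AntitoneOn.concaveOn_of_deriv (convex_Ioo _ _) ?_ ?_ ?_
  · exact fun t ht => (hder t ht).continuousAt.continuousWithinAt
  · rw [hint]; exact fun t ht => (hder t ht).differentiableAt.differentiableWithinAt
  · rw [hint]
    intro u hu v hv huv
    rw [(hder u hu).deriv, (hder v hv).deriv]
    rcases eq_or_lt_of_le huv with h | h
    · simp [h]
    · exact le_of_lt (neg_lt_neg (Real.strictMonoOn_tan hu hv h))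

lemma cos_rpow_le (θ a : ℝ) (hθ : |θ| < π/2) (ha0 : 0 ≤ a) (ha1 : a ≤ 1) :
    (Real.cos θ) ^ a ≤ Real.cos (a * θ) := by
  rw [abs_lt] at hθ
  have hθmem : θ ∈ Ioo (-(π/2)) (π/2) := ⟨hθ.1, hθ.2⟩
  have h0mem : (0:ℝ) ∈ Ioo (-(π/2)) (π/2) := by constructor <;> [linarith [Real.pi_pos]; linarith [Real.pi_pos]]
  have hcθ : 0 < Real.cos θ := Real.cos_pos_of_mem_Ioo hθmem
  have key := concave_log_cos.2 hθmem h0mem ha0 (by linarith : (0:ℝ) ≤ 1 - a) (by ring)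
  simp only [smul_eq_mul, mul_zero, add_zero, Real.cos_zero, Real.log_one] at key
  -- key : a * log (cos θ) ≤ log (cos (a * θ))
  have hcaθ : 0 < Real.cos (a * θ) := by
    apply Real.cos_pos_of_mem_Ioo
    constructor
    · nlinarith [hθ.1, hθ.2]
    · nlinarith [hθ.1, hθ.2]
  calc Real.cos θ ^ a = Real.exp (a * Real.log (Real.cos θ)) := by
        rw [Real.rpow_def_of_pos hcθ, mul_comm]
    _ ≤ Real.exp (Real.log (Real.cos (a * θ))) := Real.exp_le_exp.2 key
    _ = Real.cos (a * θ) := Real.exp_log hcaθ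

/-- The leading convolution quadrature weight d₀ = (1+b)^α − (τλ)^α has positive real part. -/
theorem stmt_9 (α τ lam r s : ℝ) (hα0 : 0 < α) (hα1 : α < 1)
    (hτ : 0 < τ) (hlam : 0 < lam) (hr : r < 0)
    (b : ℂ) (hb : b = (τ : ℂ) * ((lam : ℂ) - (r : ℂ) - Complex.I * (s : ℂ))) :
    0 < ((1 + b) ^ (α : ℂ) - ((τ * lam : ℝ) : ℂ) ^ (α : ℂ)).re := by
  set z : ℂ := 1 + b with hz
  have hre : z.re = 1 + τ * (lam - r) := by
    simp [hz, hb, Complex.add_re, Complex.mul_re, Complex.sub_re, Complex.sub_im]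
  have hxpos : 0 < z.re := by rw [hre]; nlinarith
  have hzne : z ≠ 0 := by
    intro h; rw [h] at hxpos; simp at hxpos
  have habs : 0 < ‖z‖ := norm_pos_iff.mpr hzne
  have harg : |z.arg| < π/2 := Complex.abs_arg_lt_pi_div_two_iff.2 (Or.inl hxpos)
  have hcosarg : Real.cos z.arg = z.re / ‖z‖ := Complex.cos_arg hzne
  have hxle : z.re ≤ ‖z‖ := Complex.re_le_norm z
  -- real part of z ^ α
  have hre_cpow : (z ^ (α : ℂ)).re = ‖z‖ ^ α * Real.cos (α * z.arg) := by
    rw [Complex.cpow_def_of_ne_zero hzne]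
    rw [Complex.log, Complex.exp_re]
    simp only [Complex.add_re, Complex.add_im, Complex.mul_re, Complex.mul_im,
      Complex.ofReal_re, Complex.ofReal_im, Complex.I_re, Complex.I_im]
    rw [Real.rpow_def_of_pos habs]
    ring_nf
  -- real part of RHS
  have htl : (0:ℝ) ≤ τ * lam := le_of_lt (mul_pos hτ hlam)
  have hRHS : (((τ * lam : ℝ) : ℂ) ^ (α : ℂ)).re = (τ * lam) ^ α := by
    rw [← Complex.ofReal_cpow htl]
    simp
  rw [Complex.sub_re, hre_cpow, hRHS, sub_pos]
  -- main chain
  have h1 : (τ * lam) ^ α < z.re ^ α := by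
    apply Real.rpow_lt_rpow htl _ hα0
    rw [hre]; nlinarith
  have h2 : z.re ^ α ≤ ‖z‖ ^ α * Real.cos (α * z.arg) := by
    have hx_eq : z.re = ‖z‖ * Real.cos z.arg := by
      rw [hcosarg]; field_simp
    have hcos_nonneg : 0 ≤ Real.cos z.arg := by
      rw [hcosarg]; positivity
    calc z.re ^ α = ‖z‖ ^ α * (Real.cos z.arg) ^ α := by
          rw [hx_eq, Real.mul_rpow habs.le hcos_nonneg]
      _ ≤ ‖z‖ ^ α * Real.cos (α * z.arg) := by
          apply mul_le_mul_of_nonneg_left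
            (cos_rpow_le _ _ harg hα0.le hα1.le)
            (Real.rpow_nonneg habs.le _)
  linarith
end

section
/- For τ > 0 and complex z with |zτ| ≤ π/sin θ and |arg z| = θ for some θ ∈ (π/2, π), the BDF2 symbol z_τ = [(1 − e^{−zτ}) + (1 − e^{−zτ})²/2]/τ satisfies z_τ = z + O(τ² z³), i.e. |z_τ − z| ≤ C τ² |z|³ with C depending only on θ; moreover there exist constants 0 < c ≤ C' with c|z| ≤ |z_τ| ≤ C'|z| on this range. -/
open Real Complex

set_option maxHeartbeats 2000000

lemma exp_half_le : Real.exp (1/2) ≤ 5/2 := by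
  have h2 : Real.exp (1/2) * Real.exp (1/2) = Real.exp 1 := by
    rw [← Real.exp_add]; norm_num
  have h3 := Real.exp_one_lt_d9
  nlinarith [Real.exp_pos (1/2:ℝ)]

lemma sin_abs_eq (x : ℝ) (hx : |x| ≤ π) : |Real.sin x| = Real.sin |x| := by
  rcases le_or_gt 0 x with h | h
  · rw [_root_.abs_of_nonneg h,
      _root_.abs_of_nonneg (Real.sin_nonneg_of_nonneg_of_le_pi h (by rwa [_root_.abs_of_nonneg h] at hx))]
  · rw [_root_.abs_of_neg h]
    rw [show Real.sin x = -Real.sin (-x) by rw [Real.sin_neg]; ring]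
    rw [abs_neg,
      _root_.abs_of_nonneg (Real.sin_nonneg_of_nonneg_of_le_pi (by linarith) (by rwa [_root_.abs_of_neg h] at hx))]

lemma expansionB (w : ℂ) (hr : ‖w‖ ≤ 1) :
    ‖((1 - Complex.exp (-w)) + (1 - Complex.exp (-w)) ^ 2 / 2 - w)‖ ≤
      2 * ‖w‖ ^ 3 := by
  set ρ : ℂ := Complex.exp (-w) - (1 - w + w ^ 2 / 2) with hρdef
  have hρ : ‖ρ‖ ≤ 2 / 9 * ‖w‖ ^ 3 := by
    have h := Complex.exp_bound (x := -w) (by simpa using hr) (n := 3) (by norm_num)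
    have hsum : ∑ m ∈ Finset.range 3, (-w) ^ m / (m.factorial : ℂ) = 1 - w + w ^ 2 / 2 := by
      rw [Finset.sum_range_succ, Finset.sum_range_succ, Finset.sum_range_succ]
      norm_num [Nat.factorial]
      ring
    rw [hsum] at h
    calc ‖ρ‖ ≤ ‖(-w)‖ ^ 3 * ((3:ℕ).succ * ((3:ℕ).factorial * 3 : ℝ)⁻¹) := h
      _ = 2 / 9 * ‖w‖ ^ 3 := by
        rw [norm_neg]; norm_num [Nat.factorial]; ring
  have hexp : Complex.exp (-w) = 1 - w + w ^ 2 / 2 + ρ := by rw [hρdef]; ring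
  have hid : (1 - Complex.exp (-w)) + (1 - Complex.exp (-w)) ^ 2 / 2 - w =
      -w ^ 3 / 2 + w ^ 4 / 8 - ρ * (1 + w - w ^ 2 / 2) + ρ ^ 2 / 2 := by
    rw [hexp]; ring
  rw [hid]
  set r := ‖w‖ with hrdef
  have hr0 : 0 ≤ r := norm_nonneg _
  have hρ0 : 0 ≤ ‖ρ‖ := norm_nonneg _
  calc ‖(-w ^ 3 / 2 + w ^ 4 / 8 - ρ * (1 + w - w ^ 2 / 2) + ρ ^ 2 / 2)‖
      ≤ ‖(-w ^ 3 / 2 + w ^ 4 / 8 - ρ * (1 + w - w ^ 2 / 2))‖ + ‖(ρ ^ 2 / 2)‖ :=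
        norm_add_le _ _
    _ ≤ (‖(-w ^ 3 / 2 + w ^ 4 / 8)‖ + ‖(ρ * (1 + w - w ^ 2 / 2))‖)
        + ‖(ρ ^ 2 / 2)‖ := by
        gcongr; exact norm_sub_le _ _
    _ ≤ ((‖(-w ^ 3 / 2)‖ + ‖(w ^ 4 / 8)‖) + ‖ρ‖ * (1 + r + r ^ 2 / 2))
        + ‖ρ‖ ^ 2 / 2 := by
        gcongr
        · exact norm_add_le _ _
        · rw [norm_mul]
          gcongr
          calc ‖(1 + w - w ^ 2 / 2)‖ ≤ ‖(1 + w)‖ + ‖(w ^ 2 / 2)‖ :=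
                norm_sub_le _ _
            _ ≤ (‖(1:ℂ)‖ + ‖w‖) + ‖(w ^ 2 / 2)‖ := by
                gcongr; exact norm_add_le _ _
            _ = 1 + r + r ^ 2 / 2 := by
                simp [norm_div, norm_pow, hrdef]
        · rw [norm_div, norm_pow]; norm_num
    _ ≤ 2 * r ^ 3 := by
        have h1 : ‖(-w ^ 3 / 2)‖ = r ^ 3 / 2 := by
          simp [norm_div, norm_pow, hrdef]
        have h2 : ‖(w ^ 4 / 8)‖ = r ^ 4 / 8 := by
          simp [norm_div, norm_pow, hrdef]
        rw [h1, h2]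
        have hr3 : r ^ 3 ≤ 1 := pow_le_one₀ hr0 hr
        have hr4 : r ^ 4 ≤ r ^ 3 := by nlinarith
        have hρ1 : ‖ρ‖ ≤ 2 / 9 := by nlinarith
        have hA : ‖ρ‖ * (1 + r + r ^ 2 / 2) ≤ (2 / 9 * r ^ 3) * (5 / 2) := by
          apply mul_le_mul hρ (by nlinarith) (by positivity) (by positivity)
        have hB : ‖ρ‖ ^ 2 ≤ (2 / 9) * (2 / 9 * r ^ 3) := by nlinarith
        nlinarith


lemma lowerA (u : ℂ) (h1 : 0 ≤ u.re) (h2 : |u.im| ≤ π) :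
    ‖u‖ ≤ 5 * ‖(Complex.exp u - 1)‖ := by
  set M := ‖(Complex.exp u - 1)‖ with hM
  have hM0 : 0 ≤ M := norm_nonneg _
  have habs : ‖(Complex.exp u)‖ = Real.exp u.re := Complex.norm_exp u
  have hre_le : u.re ≤ M := by
    have h3 : ‖(Complex.exp u)‖ ≤ M + 1 := by
      calc ‖(Complex.exp u)‖ = ‖((Complex.exp u - 1) + 1)‖ := by ring_nf
        _ ≤ M + ‖(1:ℂ)‖ := norm_add_le _ _
        _ = M + 1 := by simp
    have h4 : u.re + 1 ≤ Real.exp u.re := Real.add_one_le_exp u.re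
    rw [habs] at h3; linarith
  have hexp1 : (1:ℝ) ≤ Real.exp u.re := Real.one_le_exp h1
  have hpi : π ≤ 4 := Real.pi_le_four
  have hpi0 : 0 < π := Real.pi_pos
  rcases le_or_gt (|u.im|) (π / 2) with him | him
  · have hsin : 2 / π * |u.im| ≤ Real.sin |u.im| := Real.mul_le_sin (abs_nonneg _) him
    have himM : Real.sin |u.im| ≤ M := by
      have h5 : |(Complex.exp u - 1).im| ≤ M := Complex.abs_im_le_norm _
      have h6 : (Complex.exp u - 1).im = Real.exp u.re * Real.sin u.im := by
        simp [Complex.exp_im]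
      rw [h6] at h5
      rw [← sin_abs_eq u.im h2]
      calc |Real.sin u.im| ≤ Real.exp u.re * |Real.sin u.im| := by nlinarith [abs_nonneg (Real.sin u.im)]
        _ = |Real.exp u.re * Real.sin u.im| := by rw [abs_mul, _root_.abs_of_pos (Real.exp_pos _)]
        _ ≤ M := h5
    have himle : |u.im| ≤ 2 * M := by
      have h7 := hsin.trans himM
      have h8 : 2 / π * |u.im| ≥ |u.im| / 2 := by
        have h9 : 2 / π ≥ 1 / 2 := by
          rw [ge_iff_le, div_le_div_iff₀ (by norm_num) hpi0]; linarith
        nlinarith [abs_nonneg u.im]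
      linarith
    calc ‖u‖ ≤ |u.re| + |u.im| := Complex.norm_le_abs_re_add_abs_im u
      _ ≤ M + 2 * M := by rw [_root_.abs_of_nonneg h1]; linarith
      _ ≤ 5 * M := by linarith
  · have hcos : Real.cos u.im ≤ 0 := by
      rw [← Real.cos_abs]
      exact Real.cos_nonpos_of_pi_div_two_le_of_le him.le (by linarith)
    have hM1 : 1 ≤ M := by
      have h5 : |(Complex.exp u - 1).re| ≤ M := Complex.abs_re_le_norm _
      have h6 : (Complex.exp u - 1).re = Real.exp u.re * Real.cos u.im - 1 := by
        simp [Complex.exp_re]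
      rw [h6, abs_le] at h5
      nlinarith [h5.1, Real.exp_pos u.re]
    calc ‖u‖ ≤ |u.re| + |u.im| := Complex.norm_le_abs_re_add_abs_im u
      _ ≤ M + 4 := by rw [_root_.abs_of_nonneg h1]; linarith
      _ ≤ 5 * M := by linarith


/-- BDF2 symbol consistency: z_τ = [(1 − e^{−zτ}) + (1 − e^{−zτ})²/2]/τ = z + O(τ²z³),
together with the two-sided bound c|z| ≤ |z_τ| ≤ C'|z|, on |arg z| = θ, |zτ| ≤ π/sin θ. -/
theorem stmt_11 (θ : ℝ) (hθ1 : π / 2 < θ) (hθ2 : θ < π) :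
    ∃ C > 0, ∃ c > 0, ∃ C' : ℝ, c ≤ C' ∧
      ∀ τ : ℝ, 0 < τ → ∀ z : ℂ, |z.arg| = θ →
        ‖(z * (τ : ℂ))‖ ≤ π / Real.sin θ →
        ‖(((1 - Complex.exp (-z * (τ : ℂ))) +
            (1 - Complex.exp (-z * (τ : ℂ))) ^ 2 / 2) / (τ : ℂ) - z)‖ ≤
          C * τ ^ 2 * (‖z‖) ^ 3 ∧
        c * ‖z‖ ≤ ‖(((1 - Complex.exp (-z * (τ : ℂ))) +
            (1 - Complex.exp (-z * (τ : ℂ))) ^ 2 / 2) / (τ : ℂ))‖ ∧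
        ‖(((1 - Complex.exp (-z * (τ : ℂ))) +
            (1 - Complex.exp (-z * (τ : ℂ))) ^ 2 / 2) / (τ : ℂ))‖ ≤
          C' * ‖z‖ := by
  have hπ : 0 < π := Real.pi_pos
  have hπ3 : 3 < π := Real.pi_gt_three
  have hθ0 : 0 < θ := lt_trans (by linarith) hθ1
  have hsin : 0 < Real.sin θ := Real.sin_pos_of_pos_of_lt_pi hθ0 hθ2
  have hsin1 : Real.sin θ ≤ 1 := Real.sin_le_one θ
  have hcos : Real.cos θ < 0 := Real.cos_neg_of_pi_div_two_lt_of_lt hθ1 (by linarith)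
  set t : ℝ := Real.sin θ / (-Real.cos θ) with ht_def
  have ht : 0 < t := div_pos hsin (by linarith)
  set s₀ : ℝ := min (t / 2) 1 with hs₀_def
  have hs₀ : 0 < s₀ := lt_min (by linarith) one_pos
  have hs₀1 : s₀ ≤ 1 := min_le_right _ _
  have hsins₀ : 0 < Real.sin s₀ := Real.sin_pos_of_pos_of_lt_pi hs₀ (by linarith)
  set m : ℝ := min (1 / 2) (Real.sin s₀) with hm_def
  have hm : 0 < m := lt_min (by norm_num) hsins₀
  have hm2 : m ≤ 1 / 2 := min_le_left _ _
  set R : ℝ := π / Real.sin θ with hR_def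
  have hR : 0 < R := div_pos hπ hsin
  set K : ℝ := 1 + Real.exp R with hK_def
  have hK2 : 2 ≤ K := by
    have : (1:ℝ) ≤ Real.exp R := Real.one_le_exp hR.le
    linarith
  have hK0 : (0:ℝ) < K := by linarith
  set C' : ℝ := K * (1 + K * R / 2) with hC'_def
  have hKR : (0:ℝ) ≤ K * R / 2 := div_nonneg (mul_nonneg hK0.le hR.le) (by norm_num)
  have hC' : 0 < C' := by
    rw [hC'_def]
    exact mul_pos hK0 (by linarith)
  clear_value t s₀ m R K C'
  refine ⟨C' + 2, by linarith, m / 10, by linarith, C', ?_, ?_⟩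
  · -- c ≤ C'
    have h1 : (1:ℝ) ≤ 1 + K * R / 2 := by linarith
    have h2 : (2:ℝ) ≤ C' := by
      rw [hC'_def]
      calc (2:ℝ) = 2 * 1 := by norm_num
        _ ≤ K * (1 + K * R / 2) := mul_le_mul hK2 h1 (by norm_num) (by linarith)
    linarith
  intro τ hτ z harg habs
  have hz0 : z ≠ 0 := by
    intro h
    rw [h] at harg
    simp [Complex.arg_zero] at harg
    linarith [harg ▸ hθ0]
  set az : ℝ := ‖z‖ with haz_def
  have haz : 0 < az := norm_pos_iff.mpr hz0
  -- re/im of z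
  have hcosarg : Real.cos z.arg = Real.cos θ := by
    rcases abs_eq hθ0.le |>.mp harg with h | h
    · rw [h]
    · rw [h, Real.cos_neg]
  have hzre : z.re = az * Real.cos θ := by
    have := Complex.cos_arg hz0
    rw [hcosarg] at this
    rw [this, ← haz_def, mul_div_assoc', mul_div_cancel_left₀ _ haz.ne']
  have hzim : |z.im| = az * Real.sin θ := by
    have h1 := Complex.sin_arg z
    have h2 : |Real.sin z.arg| = Real.sin θ := by
      rw [sin_abs_eq z.arg (Complex.abs_arg_le_pi z), harg]
    rw [h1, abs_div, _root_.abs_of_pos haz] at h2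
    field_simp at h2
    linarith [h2]
  clear_value az
  set w : ℂ := z * (τ : ℂ) with hw_def
  have hneg : -z * (τ : ℂ) = -w := by rw [hw_def]; ring
  rw [hneg]
  set r : ℝ := az * τ with hr_def
  have hr0 : 0 < r := mul_pos haz hτ
  have habsw : ‖w‖ = r := by
    rw [hw_def, norm_mul, Complex.norm_real, Real.norm_eq_abs, _root_.abs_of_pos hτ, hr_def, haz_def]
  have hrR : r ≤ R := by rw [← habsw]; exact habs
  have hwre : w.re = r * Real.cos θ := by
    rw [hw_def, hr_def]
    simp [Complex.mul_re, Complex.ofReal_re, Complex.ofReal_im, hzre]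
    ring
  have hwim : |w.im| = r * Real.sin θ := by
    rw [hw_def, hr_def]
    simp [Complex.mul_im, Complex.ofReal_re, Complex.ofReal_im]
    rw [_root_.abs_of_pos hτ, hzim]
    ring
  clear_value w r
  have hure : (-w).re = r * (-Real.cos θ) := by
    simp only [Complex.neg_re, hwre]; ring
  have huim : |(-w).im| = r * Real.sin θ := by
    simp only [Complex.neg_im, abs_neg, hwim]
  have hure0 : 0 ≤ (-w).re := by
    rw [hure]; exact mul_nonneg hr0.le (by linarith)
  have huimπ : |(-w).im| ≤ π := by
    rw [huim]
    calc r * Real.sin θ ≤ R * Real.sin θ :=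
          mul_le_mul_of_nonneg_right hrR hsin.le
      _ = π := by rw [hR_def]; field_simp
  set ζ : ℂ := Complex.exp (-w) with hζ_def
  have habsζ : ‖ζ‖ = Real.exp (-w).re := Complex.norm_exp _
  clear_value ζ
  have habsζR : ‖ζ‖ ≤ Real.exp R := by
    rw [habsζ]
    apply Real.exp_le_exp.mpr
    rw [hure]
    have h1 : -Real.cos θ ≤ 1 := by linarith [Real.neg_one_le_cos θ]
    calc r * (-Real.cos θ) ≤ r * 1 := mul_le_mul_of_nonneg_left h1 hr0.le
      _ = r := mul_one r
      _ ≤ R := hrR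
  -- lower bound on |1 - ζ|
  have hA : r / 5 ≤ ‖(1 - ζ)‖ := by
    have := lowerA (-w) hure0 huimπ
    rw [norm_neg, habsw] at this
    rw [← hζ_def] at this  -- lemma gives abs (exp (-w) - 1)
    rw [show (1:ℂ) - ζ = -(ζ - 1) by ring, norm_neg]
    linarith
  -- lower bound on |3 - ζ|
  have hB : m ≤ ‖(3 - ζ)‖ := by
    rcases le_or_gt (-w).re (1 / 2) with hcase | hcase
    · have hζle : ‖ζ‖ ≤ 5 / 2 := by
        rw [habsζ]
        exact le_trans (Real.exp_le_exp.mpr hcase) exp_half_le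
      have h4 : (3:ℝ) ≤ ‖(3 - ζ)‖ + ‖ζ‖ := by
        have := norm_add_le (3 - ζ) ζ
        simpa using this
      linarith
    · have himeq : |(-w).im| = (-w).re * t := by
        have hc0 : Real.cos θ ≠ 0 := ne_of_lt hcos
        rw [huim, hure, ht_def]
        field_simp
      have himgt : s₀ ≤ |(-w).im| := by
        rw [himeq]
        calc s₀ ≤ t / 2 := by rw [hs₀_def]; exact min_le_left _ _
          _ = (1 / 2) * t := by ring
          _ ≤ (-w).re * t := mul_le_mul_of_nonneg_right hcase.le ht.le
      rcases le_or_gt (π / 2) |(-w).im| with hc2 | hc2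
      · have hcosim : Real.cos (-w).im ≤ 0 := by
          rw [← Real.cos_abs]
          exact Real.cos_nonpos_of_pi_div_two_le_of_le hc2 (by linarith)
        have hζre : ζ.re ≤ 0 := by
          rw [hζ_def]
          rw [show (Complex.exp (-w)).re = Real.exp (-w).re * Real.cos (-w).im from by simp [Complex.exp_re]]
          exact mul_nonpos_of_nonneg_of_nonpos (Real.exp_pos _).le hcosim
        have h5 : |(3 - ζ).re| ≤ ‖(3 - ζ)‖ := Complex.abs_re_le_norm _
        have h6 : (3 - ζ).re = 3 - ζ.re := by simp
        rw [h6, abs_le] at h5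
        linarith [h5.2]
      · have hsinle : Real.sin s₀ ≤ |Real.sin (-w).im| := by
          rw [sin_abs_eq _ huimπ]
          apply Real.strictMonoOn_sin.monotoneOn ⟨by linarith, by linarith⟩
            ⟨by linarith [abs_nonneg (-w).im], hc2.le⟩ himgt
        have h5 : |(3 - ζ).im| ≤ ‖(3 - ζ)‖ := Complex.abs_im_le_norm _
        have h6 : (3 - ζ).im = -(Real.exp (-w).re * Real.sin (-w).im) := by
          simp [hζ_def, Complex.exp_im]
        rw [h6, abs_neg, abs_mul, _root_.abs_of_pos (Real.exp_pos _)] at h5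
        have h7 : |Real.sin (-w).im| ≤ Real.exp (-w).re * |Real.sin (-w).im| :=
          le_mul_of_one_le_left (abs_nonneg _) (Real.one_le_exp hure0)
        calc m ≤ Real.sin s₀ := by rw [hm_def]; exact min_le_right _ _
          _ ≤ |Real.sin (-w).im| := hsinle
          _ ≤ Real.exp (-w).re * |Real.sin (-w).im| := h7
          _ ≤ ‖(3 - ζ)‖ := h5
  -- the symbol f
  set f : ℂ := (1 - ζ) + (1 - ζ) ^ 2 / 2 with hf_def
  clear_value f
  have hfact : f = (1 - ζ) * (3 - ζ) / 2 := by rw [hf_def]; ring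
  have habsf : ‖f‖ = ‖(1 - ζ)‖ * ‖(3 - ζ)‖ / 2 := by
    rw [hfact, norm_div, norm_mul]; norm_num
  -- lower bound |f| >= (m/10) r
  have hflow : m / 10 * r ≤ ‖f‖ := by
    rw [habsf]
    have := mul_le_mul hA hB hm.le (norm_nonneg (1 - ζ))
    linarith
  -- upper bound |1 - ζ| ≤ K r
  have hCup : ‖(1 - ζ)‖ ≤ K * r := by
    rcases le_or_gt r 1 with hc | hc
    · have h1 : ‖(Complex.exp (-w) - 1)‖ ≤ 2 * ‖(-w)‖ := by
        apply Complex.norm_exp_sub_one_le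
        rw [norm_neg, habsw]; exact hc
      rw [norm_neg, habsw] at h1
      rw [show (1:ℂ) - ζ = -(Complex.exp (-w) - 1) by rw [hζ_def]; ring, norm_neg]
      calc ‖(Complex.exp (-w) - 1)‖ ≤ 2 * r := h1
        _ ≤ K * r := mul_le_mul_of_nonneg_right hK2 hr0.le
    · have h1 : ‖(1 - ζ)‖ ≤ 1 + Real.exp R := by
        calc ‖(1 - ζ)‖ ≤ ‖(1:ℂ)‖ + ‖ζ‖ := norm_sub_le _ _
          _ ≤ 1 + Real.exp R := by
              rw [norm_one]
              linarith [habsζR]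
      calc ‖(1 - ζ)‖ ≤ K := by rw [hK_def]; linarith
        _ ≤ K * r := le_mul_of_one_le_right hK0.le hc.le
  -- upper bound |f| ≤ C' r
  have hfup : ‖f‖ ≤ C' * r := by
    have h1 : ‖f‖ ≤ ‖(1 - ζ)‖ + ‖(1 - ζ)‖ ^ 2 / 2 := by
      rw [hf_def]
      calc ‖((1 - ζ) + (1 - ζ) ^ 2 / 2)‖
          ≤ ‖(1 - ζ)‖ + ‖((1 - ζ) ^ 2 / 2)‖ := norm_add_le _ _
        _ = ‖(1 - ζ)‖ + ‖(1 - ζ)‖ ^ 2 / 2 := by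
            rw [norm_div, norm_pow]; norm_num
    have h2 : ‖(1 - ζ)‖ ^ 2 ≤ K ^ 2 * R * r := by
      calc ‖(1 - ζ)‖ ^ 2 ≤ (K * r) ^ 2 :=
            pow_le_pow_left₀ (norm_nonneg _) hCup 2
        _ = K ^ 2 * r * r := by ring
        _ ≤ K ^ 2 * R * r :=
            mul_le_mul_of_nonneg_right
              (mul_le_mul_of_nonneg_left hrR (by positivity)) hr0.le
    rw [hC'_def]
    calc ‖f‖ ≤ K * r + (K ^ 2 * R * r) / 2 := by linarith
      _ = K * (1 + K * R / 2) * r := by ring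
  -- consistency |f - w| ≤ (C' + 2) r^3
  have hcons : ‖(f - w)‖ ≤ (C' + 2) * r ^ 3 := by
    rcases le_or_gt r 1 with hc | hc
    · have h1 := expansionB w (by rw [habsw]; exact hc)
      rw [habsw, ← hζ_def, ← hf_def] at h1
      calc ‖(f - w)‖ ≤ 2 * r ^ 3 := h1
        _ ≤ (C' + 2) * r ^ 3 :=
            mul_le_mul_of_nonneg_right (by linarith) (by positivity)
    · have h1 : ‖(f - w)‖ ≤ ‖f‖ + ‖w‖ := norm_sub_le _ _
      rw [habsw] at h1
      have h2 : r ≤ r ^ 3 := by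
        calc r = r ^ 1 := (pow_one r).symm
          _ ≤ r ^ 3 := pow_le_pow_right₀ hc.le (by norm_num)
      have h3 : C' * r ≤ C' * r ^ 3 := mul_le_mul_of_nonneg_left h2 hC'.le
      calc ‖(f - w)‖ ≤ C' * r + r := by linarith
        _ ≤ (C' + 1) * r ^ 3 := by rw [add_mul]; linarith
        _ ≤ (C' + 2) * r ^ 3 :=
            mul_le_mul_of_nonneg_right (by linarith) (by positivity)
  -- conversions
  have hτC : (τ : ℂ) ≠ 0 := by exact_mod_cast hτ.ne'
  have habsτ : ‖(τ : ℂ)‖ = τ := by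
    rw [Complex.norm_real, Real.norm_eq_abs, _root_.abs_of_pos hτ]
  have hdiv : ‖(f / (τ : ℂ))‖ = ‖f‖ / τ := by
    rw [norm_div, habsτ]
  refine ⟨?_, ?_, ?_⟩
  · have heq : f / (τ : ℂ) - z = (f - w) / (τ : ℂ) := by
      rw [hw_def]; field_simp
    rw [heq, norm_div, habsτ]
    rw [div_le_iff₀ hτ]
    calc ‖(f - w)‖ ≤ (C' + 2) * r ^ 3 := hcons
      _ = (C' + 2) * τ ^ 2 * az ^ 3 * τ := by rw [hr_def]; ring
  · rw [hdiv, le_div_iff₀ hτ]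
    calc m / 10 * az * τ = m / 10 * r := by rw [hr_def]; ring
      _ ≤ ‖f‖ := hflow
  · rw [hdiv, div_le_iff₀ hτ]
    calc ‖f‖ ≤ C' * r := hfup
      _ = C' * az * τ := by rw [hr_def]; ring
end
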